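/- For every integer m ≥ 0 and real θ, ∑_{j=0}^m (-1)^j C(m+j+1, 2j+1) (2 cos θ)^{2j+1} · sin θ = cos θ · U_{2m+1}(sin θ), where U_k is the Chebyshev polynomial of the second kind. -/
import Mathlib


open Real Finset Polynomial

private lemma nat_id (n r : ℕ) :
    (n + 2).choose (r + 2) + n.choose (r + 2) = 2 * (n + 1).choose (r + 2) + n.choose r := by
  rw [show n + 2 = (n + 1) + 1 from rfl, Nat.choose_succ_succ (n + 1) (r + 1),
    Nat.choose_succ_succ n (r + 1), Nat.choose_succ_succ n r]
  ring

private lemma sum_rec (m : ℕ) (y : ℝ) :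
    (∑ j ∈ Finset.range (m + 3), (-1 : ℝ) ^ j * (Nat.choose (m + j + 3) (2 * j + 1)) * y ^ (2 * j + 1))
      = (2 - y ^ 2) *
        (∑ j ∈ Finset.range (m + 2), (-1 : ℝ) ^ j * (Nat.choose (m + j + 2) (2 * j + 1)) * y ^ (2 * j + 1))
        - ∑ j ∈ Finset.range (m + 1), (-1 : ℝ) ^ j * (Nat.choose (m + j + 1) (2 * j + 1)) * y ^ (2 * j + 1) := by
  have hB : (∑ j ∈ Finset.range (m + 2), (-1 : ℝ) ^ j * (Nat.choose (m + j + 2) (2 * j + 1)) * y ^ (2 * j + 1))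
      = ∑ j ∈ Finset.range (m + 3), (-1 : ℝ) ^ j * (Nat.choose (m + j + 2) (2 * j + 1)) * y ^ (2 * j + 1) := by
    rw [Finset.sum_range_succ (n := m + 2)]
    have h0 : Nat.choose (m + (m + 2) + 2) (2 * (m + 2) + 1) = 0 :=
      Nat.choose_eq_zero_of_lt (by omega)
    simp [h0]
  have hC : (∑ j ∈ Finset.range (m + 1), (-1 : ℝ) ^ j * (Nat.choose (m + j + 1) (2 * j + 1)) * y ^ (2 * j + 1))
      = ∑ j ∈ Finset.range (m + 3), (-1 : ℝ) ^ j * (Nat.choose (m + j + 1) (2 * j + 1)) * y ^ (2 * j + 1) := by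
    rw [show m + 3 = (m + 2) + 1 from rfl, Finset.sum_range_succ (n := m + 2),
      Finset.sum_range_succ (n := m + 1)]
    have h1 : Nat.choose (m + (m + 1) + 1) (2 * (m + 1) + 1) = 0 :=
      Nat.choose_eq_zero_of_lt (by omega)
    have h2 : Nat.choose (m + (m + 2) + 1) (2 * (m + 2) + 1) = 0 :=
      Nat.choose_eq_zero_of_lt (by omega)
    simp [h1, h2]
  rw [hB, hC]
  have hshift : y ^ 2 * (∑ j ∈ Finset.range (m + 3), (-1 : ℝ) ^ j * (Nat.choose (m + j + 2) (2 * j + 1)) * y ^ (2 * j + 1))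
      = ∑ j ∈ Finset.range (m + 3), (-1 : ℝ) ^ j * (Nat.choose (m + j + 2) (2 * j + 1)) * y ^ (2 * j + 3) := by
    rw [Finset.mul_sum]
    exact Finset.sum_congr rfl fun j _ => by ring
  have hshift2 : (∑ j ∈ Finset.range (m + 3), (-1 : ℝ) ^ j * (Nat.choose (m + j + 2) (2 * j + 1)) * y ^ (2 * j + 3))
      = ∑ j ∈ Finset.range (m + 3),
          (if j = 0 then 0 else (-1 : ℝ) ^ (j - 1) * (Nat.choose (m + j + 1) (2 * j - 1)) * y ^ (2 * j + 1)) := by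
    conv_lhs => rw [show m + 3 = (m + 2) + 1 from rfl, Finset.sum_range_succ]
    conv_rhs => rw [show m + 3 = (m + 2) + 1 from rfl, Finset.sum_range_succ']
    have h0 : Nat.choose (m + (m + 2) + 2) (2 * (m + 2) + 1) = 0 :=
      Nat.choose_eq_zero_of_lt (by omega)
    rw [h0, if_pos rfl]
    simp only [Nat.cast_zero, mul_zero, zero_mul, add_zero]
    refine Finset.sum_congr rfl fun j _ => ?_
    rw [if_neg (Nat.succ_ne_zero j), Nat.add_sub_cancel,
      show m + (j + 1) + 1 = m + j + 2 from by omega,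
      show 2 * (j + 1) - 1 = 2 * j + 1 from by omega,
      show 2 * (j + 1) + 1 = 2 * j + 3 from by omega]
  rw [sub_mul, two_mul, hshift, hshift2, ← Finset.sum_add_distrib, ← Finset.sum_sub_distrib,
    ← Finset.sum_sub_distrib]
  refine Finset.sum_congr rfl fun j _ => ?_
  rcases j with _ | k
  · rw [if_pos rfl]
    push_cast [Nat.choose_one_right]
    ring
  · rw [if_neg (Nat.succ_ne_zero k), Nat.add_sub_cancel,
      show m + (k + 1) + 3 = (m + k + 2) + 2 from by omega,
      show m + (k + 1) + 2 = (m + k + 2) + 1 from by omega,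
      show m + (k + 1) + 1 = m + k + 2 from by omega,
      show 2 * (k + 1) + 1 = (2 * k + 1) + 2 from by omega,
      show 2 * (k + 1) - 1 = 2 * k + 1 from by omega]
    have h' : (((m + k + 2) + 2).choose ((2 * k + 1) + 2) : ℝ) + ((m + k + 2).choose ((2 * k + 1) + 2) : ℝ)
        = 2 * (((m + k + 2) + 1).choose ((2 * k + 1) + 2) : ℝ) + ((m + k + 2).choose (2 * k + 1) : ℝ) := by
      exact_mod_cast nat_id (m + k + 2) (2 * k + 1)
    linear_combination ((-1 : ℝ) ^ (k + 1) * y ^ ((2 * k + 1) + 2)) * h'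

private lemma key (m : ℕ) (θ : ℝ) :
    (∑ j ∈ Finset.range (m + 1), (-1 : ℝ) ^ j * (Nat.choose (m + j + 1) (2 * j + 1)) *
        (2 * Real.cos θ) ^ (2 * j + 1)) * Real.sin θ
      = (-1 : ℝ) ^ m * Real.sin ((2 * m + 2) * θ) := by
  induction m using Nat.twoStepInduction with
  | zero =>
    norm_num
    rw [show (2 : ℝ) * θ = θ + θ by ring, Real.sin_add]
    ring
  | one =>
    rw [Finset.sum_range_succ, Finset.sum_range_one]
    norm_num
    rw [show (4 : ℝ) * θ = 2 * θ + 2 * θ by ring, Real.sin_add, Real.sin_two_mul,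
      Real.cos_two_mul]
    ring
  | more m ih1 ih2 =>
    simp only [show ∀ j, m + 2 + j + 1 = m + j + 3 from fun j => by omega,
      show m + 2 + 1 = m + 3 from rfl]
    simp only [show ∀ j, m + 1 + j + 1 = m + j + 2 from fun j => by omega,
      show m + 1 + 1 = m + 2 from rfl] at ih2
    rw [sum_rec m (2 * Real.cos θ), sub_mul, mul_assoc, ih2, ih1]
    have hs : Real.sin ((2 * (m : ℝ) + 6) * θ) + Real.sin ((2 * (m : ℝ) + 2) * θ)
        = 2 * Real.sin ((2 * (m : ℝ) + 4) * θ) * (2 * Real.cos θ ^ 2 - 1) := by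
      rw [show (2 * (m : ℝ) + 6) * θ = (2 * (m : ℝ) + 4) * θ + 2 * θ by ring,
        show (2 * (m : ℝ) + 2) * θ = (2 * (m : ℝ) + 4) * θ - 2 * θ by ring,
        Real.sin_add, Real.sin_sub, Real.cos_two_mul]
      ring
    push_cast
    rw [show (2 * ((m : ℝ) + 1) + 2) * θ = (2 * (m : ℝ) + 4) * θ by ring,
      show (2 * ((m : ℝ) + 2) + 2) * θ = (2 * (m : ℝ) + 6) * θ by ring]
    linear_combination (-(-1 : ℝ) ^ m) * hs

theorem stmt_15 (m : ℕ) (θ : ℝ) :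
    (∑ j ∈ Finset.range (m + 1), (-1 : ℝ) ^ j * (Nat.choose (m + j + 1) (2 * j + 1)) *
        (2 * Real.cos θ) ^ (2 * j + 1)) * Real.sin θ
      = Real.cos θ * (Polynomial.Chebyshev.U ℝ (2 * m + 1)).eval (Real.sin θ) := by
  have hU := Polynomial.Chebyshev.U_real_cos (π / 2 - θ) (2 * m + 1)
  rw [Real.cos_pi_div_two_sub, Real.sin_pi_div_two_sub] at hU
  have h2 : ((2 * (m : ℤ) + 1 : ℤ) + 1 : ℝ) * (π / 2 - θ) = (m + 1 : ℕ) * π - (2 * m + 2) * θ := by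
    push_cast; ring
  rw [h2, Real.sin_nat_mul_pi_sub] at hU
  rw [key, mul_comm (Real.cos θ), hU]
  push_cast
  ring
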